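/- arXiv:2410.23288 — 7 statements merged into one kernel-verified Lean document; each statement's English description precedes it below -/
import Mathlib

section
/- Let S = Λ + M be a periodic point set in ℝ^n and let G be a Λ-periodic graph on S. If (QC) for all p, q ∈ S there exists v ∈ Λ such that p and q + v are joined by a path in G, and (TS) the subgroup of Λ generated by the set {v ∈ Λ : there exists p ∈ S with p and p + v joined by a path in G} equals Λ, then any two points of S are joined by a path in G (the lifted periodic graph G is connected on S). -/
noncomputable section

/-- The lattice Λ generated by the basis `b`: the ℤ-span of the basis vectors,
i.e. the set of all integer linear combinations of the basis vectors. -/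
def lat {n : ℕ} (b : Module.Basis (Fin n) ℝ (EuclideanSpace ℝ (Fin n))) :
    Submodule ℤ (EuclideanSpace ℝ (Fin n)) :=
  Submodule.span ℤ (Set.range (b : Fin n → EuclideanSpace ℝ (Fin n)))

/-- The unit cell U of the basis `b`: points whose coordinates t_i in the basis satisfy
0 ≤ t_i < 1. -/
def unitCell {n : ℕ} (b : Module.Basis (Fin n) ℝ (EuclideanSpace ℝ (Fin n))) :
    Set (EuclideanSpace ℝ (Fin n)) :=
  {x | ∀ i, 0 ≤ b.repr x i ∧ b.repr x i < 1}

/-- The periodic point set S = Λ + M. -/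
def periodicSet {n : ℕ} (b : Module.Basis (Fin n) ℝ (EuclideanSpace ℝ (Fin n)))
    (M : Set (EuclideanSpace ℝ (Fin n))) : Set (EuclideanSpace ℝ (Fin n)) :=
  {x | ∃ l ∈ (lat b : Set (EuclideanSpace ℝ (Fin n))), ∃ p ∈ M, x = l + p}

/-- Let S = Λ + M be a periodic point set in ℝ^n and G a Λ-periodic graph on S.
If (QC) for all p, q ∈ S there is v ∈ Λ with p and q + v joined by a path in G, and
(TS) the subgroup of Λ generated by {v ∈ Λ : ∃ p ∈ S, p and p + v joined by a path in G}
equals Λ, then any two points of S are joined by a path in G. -/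
theorem lifted_graph_connected {n : ℕ}
    (b : Module.Basis (Fin n) ℝ (EuclideanSpace ℝ (Fin n)))
    (M : Set (EuclideanSpace ℝ (Fin n))) (hMfin : M.Finite) (hMne : M.Nonempty)
    (hMU : M ⊆ unitCell b)
    (G : SimpleGraph (EuclideanSpace ℝ (Fin n)))
    (hedge : ∀ p q, G.Adj p q → p ∈ periodicSet b M ∧ q ∈ periodicSet b M)
    (hper : ∀ v ∈ lat b, ∀ p q : EuclideanSpace ℝ (Fin n), G.Adj p q → G.Adj (p + v) (q + v))
    (hQC : ∀ p ∈ periodicSet b M, ∀ q ∈ periodicSet b M,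
      ∃ v ∈ lat b, G.Reachable p (q + v))
    (hTS : Submodule.span ℤ {v : EuclideanSpace ℝ (Fin n) |
      v ∈ lat b ∧ ∃ p ∈ periodicSet b M, G.Reachable p (p + v)} = lat b) :
    ∀ p ∈ periodicSet b M, ∀ q ∈ periodicSet b M, G.Reachable p q := by
  -- translation invariance of reachability
  have htrans : ∀ v ∈ lat b, ∀ p q : EuclideanSpace ℝ (Fin n),
      G.Reachable p q → G.Reachable (p + v) (q + v) := by
    intro v hv p q h
    exact h.map ⟨fun x => x + v, fun h => hper v hv _ _ h⟩
  -- for every base point p ∈ S, every lattice vector translates reachably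
  have key : ∀ p ∈ periodicSet b M, ∀ v ∈ lat b, G.Reachable p (p + v) := by
    intro p hp
    set A : AddSubgroup (EuclideanSpace ℝ (Fin n)) :=
      { carrier := {v | v ∈ lat b ∧ G.Reachable p (p + v)}
        zero_mem' := ⟨(lat b).zero_mem, by simpa using SimpleGraph.Reachable.refl p⟩
        add_mem' := by
          rintro x y ⟨hx, rx⟩ ⟨hy, ry⟩
          refine ⟨(lat b).add_mem hx hy, ?_⟩
          have h1 := htrans x hx p (p + y) ry
          have h2 := rx.trans h1
          have h3 : p + y + x = p + (x + y) := by abel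
          rwa [h3] at h2
        neg_mem' := by
          rintro x ⟨hx, rx⟩
          refine ⟨(lat b).neg_mem hx, ?_⟩
          have := htrans (-x) ((lat b).neg_mem hx) p (p + x) rx
          simpa using this.symm } with hA
    have hTA : {v : EuclideanSpace ℝ (Fin n) |
        v ∈ lat b ∧ ∃ q ∈ periodicSet b M, G.Reachable q (q + v)} ⊆ A := by
      rintro v ⟨hv, q, hq, rq⟩
      refine ⟨hv, ?_⟩
      obtain ⟨w, hw, rpw⟩ := hQC p hp q hq
      have r1 : G.Reachable (q + w) (q + v + w) := by
        have := htrans w hw q (q + v) rq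
        rwa [add_right_comm] at this ⊢
      have r2 : G.Reachable (p + v) (q + w + v) := htrans v hv p (q + w) rpw
      have r3 : G.Reachable p (q + v + w) := rpw.trans r1
      rw [add_right_comm] at r2
      exact r3.trans r2.symm
    have hspan : Submodule.span ℤ {v : EuclideanSpace ℝ (Fin n) |
        v ∈ lat b ∧ ∃ q ∈ periodicSet b M, G.Reachable q (q + v)} ≤ A.toIntSubmodule :=
      Submodule.span_le.mpr hTA
    rw [hTS] at hspan
    intro v hv
    exact (hspan hv).2
  intro p hp q hq
  obtain ⟨v, hv, rpv⟩ := hQC p hp q hq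
  exact rpv.trans (key q hq v hv).symm
end
end

section
/- Let S = Λ + M be a periodic point set in ℝ^n and let G be a Λ-periodic graph on S. Then any two points of S are joined by a path in G if and only if both of the following hold: (QC) for all p, q ∈ S there exists v ∈ Λ such that p and q + v are joined by a path in G, and (TS) the subgroup of Λ generated by {v ∈ Λ : there exists p ∈ S with p and p + v joined by a path in G} equals Λ. -/
noncomputable section

/-- S = Λ + M a periodic point set, G a Λ-periodic graph on S.
Any two points of S are joined by a path in G iff both (QC) and (TS) hold. -/
theorem lifted_graph_connected_iff {n : ℕ}
    (b : Module.Basis (Fin n) ℝ (EuclideanSpace ℝ (Fin n)))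
    (M : Set (EuclideanSpace ℝ (Fin n))) (hMfin : M.Finite) (hMne : M.Nonempty)
    (hMU : M ⊆ unitCell b)
    (G : SimpleGraph (EuclideanSpace ℝ (Fin n)))
    (hedge : ∀ p q, G.Adj p q → p ∈ periodicSet b M ∧ q ∈ periodicSet b M)
    (hper : ∀ v ∈ lat b, ∀ p q : EuclideanSpace ℝ (Fin n), G.Adj p q → G.Adj (p + v) (q + v)) :
    (∀ p ∈ periodicSet b M, ∀ q ∈ periodicSet b M, G.Reachable p q) ↔
      ((∀ p ∈ periodicSet b M, ∀ q ∈ periodicSet b M,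
          ∃ v ∈ lat b, G.Reachable p (q + v)) ∧
        Submodule.span ℤ {v : EuclideanSpace ℝ (Fin n) |
          v ∈ lat b ∧ ∃ p ∈ periodicSet b M, G.Reachable p (p + v)} = lat b) := by
  -- translation invariance of reachability
  have hlat : ∀ {v : EuclideanSpace ℝ (Fin n)}, v ∈ lat b →
      ∀ p q, G.Reachable p q → G.Reachable (p + v) (q + v) := by
    intro v hv p q hpq
    rw [SimpleGraph.reachable_iff_reflTransGen] at hpq ⊢
    induction hpq with
    | refl => exact Relation.ReflTransGen.refl
    | tail _ hadj ih => exact ih.tail (hper v hv _ _ hadj)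
  -- S is stable under lattice translations
  have hS : ∀ p ∈ periodicSet b M, ∀ v ∈ lat b, p + v ∈ periodicSet b M := by
    rintro p ⟨l, hl, m, hm, rfl⟩ v hv
    exact ⟨l + v, add_mem hl hv, m, hm, by abel⟩
  obtain ⟨m0, hm0⟩ := hMne
  have hp0 : m0 ∈ periodicSet b M := ⟨0, zero_mem _, m0, hm0, (zero_add m0).symm⟩
  constructor
  · intro h
    refine ⟨fun p hp q hq => ⟨0, zero_mem _, by rw [add_zero]; exact h p hp q hq⟩, ?_⟩
    have hset : {v : EuclideanSpace ℝ (Fin n) |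
        v ∈ lat b ∧ ∃ p ∈ periodicSet b M, G.Reachable p (p + v)} =
        (lat b : Set (EuclideanSpace ℝ (Fin n))) := by
      ext v
      constructor
      · rintro ⟨hv, -⟩; exact hv
      · intro hv
        exact ⟨hv, m0, hp0, h m0 hp0 (m0 + v) (hS m0 hp0 v hv)⟩
    rw [hset, Submodule.span_eq]
  · rintro ⟨hQC, hTS⟩ p hp q hq
    -- the subgroup of return vectors at the base point m0
    set H : AddSubgroup (EuclideanSpace ℝ (Fin n)) :=
      { carrier := {v | v ∈ lat b ∧ G.Reachable m0 (m0 + v)}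
        zero_mem' := ⟨zero_mem _, by rw [add_zero]⟩
        add_mem' := by
          rintro a c ⟨ha, hra⟩ ⟨hc, hrc⟩
          refine ⟨add_mem ha hc, hra.trans ?_⟩
          have h' := hlat ha _ _ hrc
          have e : m0 + c + a = m0 + (a + c) := by abel
          rw [e] at h'
          exact h'
        neg_mem' := by
          rintro a ⟨ha, hra⟩
          refine ⟨neg_mem ha, ?_⟩
          have := hlat (neg_mem ha) _ _ hra
          simpa using this.symm } with hHdef
    -- every "TS generator" lies in H
    have hRH : {v : EuclideanSpace ℝ (Fin n) |
        v ∈ lat b ∧ ∃ p ∈ periodicSet b M, G.Reachable p (p + v)} ⊆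
        (H.toIntSubmodule : Set (EuclideanSpace ℝ (Fin n))) := by
      rintro v ⟨hv, p', hp', hr⟩
      obtain ⟨w, hw, hpw⟩ := hQC m0 hp0 p' hp'
      have h1 := hlat hw _ _ hr
      have h2 := hlat hv _ _ hpw
      refine ⟨hv, (hpw.trans h1).trans ?_⟩
      have h3 : G.Reachable (m0 + v) (p' + w + v) := h2
      have : p' + v + w = p' + w + v := by abel
      rw [this]
      exact h3.symm
    have hlatH : ∀ v ∈ lat b, G.Reachable m0 (m0 + v) := by
      intro v hv
      have : (lat b : Submodule ℤ (EuclideanSpace ℝ (Fin n))) ≤ H.toIntSubmodule := by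
        rw [← hTS]
        exact Submodule.span_le.mpr hRH
      exact (this hv).2
    -- hence every point of S returns to itself under lattice translation
    have hret : ∀ r ∈ periodicSet b M, ∀ w ∈ lat b, G.Reachable r (r + w) := by
      intro r hr w hw
      obtain ⟨u, hu, h0r⟩ := hQC m0 hp0 r hr
      have h1 : G.Reachable (m0 + w) (r + u + w) := hlat hw _ _ h0r
      have h2 : G.Reachable (r + u) (r + u + w) := (h0r.symm.trans (hlatH w hw)).trans h1
      have h3 := hlat (neg_mem hu) _ _ h2
      have e1 : r + u + -u = r := by abel
      have e2 : r + u + w + -u = r + w := by abel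
      rw [e1, e2] at h3
      exact h3
    obtain ⟨w, hw, hrw⟩ := hQC p hp q hq
    exact hrw.trans (hret q hq w hw).symm
end
end

section
/- Let S = Λ + M be a periodic point set in ℝ^n with motif M of m points, and let G be a Λ-periodic graph on S satisfying condition (QC): for all p, q ∈ S there exists v ∈ Λ such that p and q + v are joined by a path in G. Then there exists a set T ⊆ S of exactly m points containing exactly one representative of each Λ-equivalence class p + Λ (p ∈ M) such that the induced subgraph of G on T is connected (a tree of representatives exists in G). -/
noncomputable section

/-- Two points of the unit cell that differ by a lattice vector are equal. -/
lemma unitCell_inj {n : ℕ} {b : Module.Basis (Fin n) ℝ (EuclideanSpace ℝ (Fin n))}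
    {p q : EuclideanSpace ℝ (Fin n)} (hp : p ∈ unitCell b) (hq : q ∈ unitCell b)
    (h : p - q ∈ lat b) : p = q := by
  have hrepr : ∀ i, b.repr (p - q) i ∈ Set.range (algebraMap ℤ ℝ) :=
    (b.mem_span_iff_repr_mem ℤ (p - q)).mp h
  have hz : b.repr (p - q) = 0 := by
    ext i
    obtain ⟨z, hzi⟩ := hrepr i
    have h1 := hp i
    have h2 := hq i
    have hsub : b.repr (p - q) i = b.repr p i - b.repr q i := by
      rw [map_sub]; rfl
    have hzr : (z : ℝ) = b.repr p i - b.repr q i := by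
      rw [← hsub, ← hzi]; rfl
    have hlt : (z : ℝ) < 1 := by rw [hzr]; linarith
    have hgt : (-1 : ℝ) < z := by rw [hzr]; linarith
    have hz0 : z = 0 := by
      have h1' : z < 1 := by exact_mod_cast hlt
      have h2' : -1 < z := by exact_mod_cast hgt
      omega
    simp only [Finsupp.coe_zero, Pi.zero_apply]
    rw [← hzi, hz0]; simp
  have hpq : p - q = 0 := by
    have h0 : b.repr (p - q) = b.repr 0 := by rw [hz, map_zero]
    exact b.repr.injective h0
  exact sub_eq_zero.mp hpq

lemma mem_periodicSet_of_mem {n : ℕ} {b : Module.Basis (Fin n) ℝ (EuclideanSpace ℝ (Fin n))}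
    {M : Set (EuclideanSpace ℝ (Fin n))} {p : EuclideanSpace ℝ (Fin n)} (hp : p ∈ M) :
    p ∈ periodicSet b M :=
  ⟨0, (lat b).zero_mem, p, hp, (zero_add p).symm⟩

lemma periodicSet_add_lat {n : ℕ} {b : Module.Basis (Fin n) ℝ (EuclideanSpace ℝ (Fin n))}
    {M : Set (EuclideanSpace ℝ (Fin n))} {x v : EuclideanSpace ℝ (Fin n)}
    (hx : x ∈ periodicSet b M) (hv : v ∈ lat b) : x + v ∈ periodicSet b M := by
  obtain ⟨l, hl, p, hp, rfl⟩ := hx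
  exact ⟨l + v, (lat b).add_mem hl hv, p, hp, by abel⟩

/-- Along a walk from a point satisfying `P` to a point not satisfying `P`, there is an
edge crossing the boundary. -/
lemma walk_crossing {V : Type*} {G : SimpleGraph V} (P : V → Prop) :
    ∀ {x y : V}, G.Walk x y → P x → ¬ P y →
      ∃ a c, G.Adj a c ∧ P a ∧ ¬ P c := by
  intro x y w
  induction w with
  | nil => intro hx hy; exact absurd hx hy
  | @cons u v z h w ih =>
    intro hx hy
    by_cases hv : P v
    · exact ih hv hy
    · exact ⟨u, v, h, hx, hv⟩

/-- Adding to a connected induced subgraph a vertex adjacent to it keeps it connected. -/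
lemma induce_insert_connected {V : Type*} {G : SimpleGraph V} {s : Set V}
    (hs : (G.induce s).Connected) {x y : V} (hy : y ∈ s) (hadj : G.Adj x y) :
    (G.induce (insert x s)).Connected := by
  let incl : G.induce s →g G.induce (insert x s) :=
    ⟨fun v => ⟨v.1, Or.inr v.2⟩, fun {a c} h => h⟩
  have hkey : ∀ w : (insert x s : Set V), (G.induce (insert x s)).Reachable w ⟨y, Or.inr hy⟩ := by
    rintro ⟨w, hw | hw⟩
    · subst hw
      exact SimpleGraph.Adj.reachable hadj
    · have h1 := (hs.preconnected ⟨w, hw⟩ ⟨y, hy⟩).map incl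
      exact h1
  haveI : Nonempty (insert x s : Set V) := ⟨⟨y, Or.inr hy⟩⟩
  exact SimpleGraph.Connected.mk fun u v => (hkey u).trans (hkey v).symm

/-- If the quotient graph is connected (condition QC), then G contains a
tree of representatives: a set T ⊆ S of exactly m = |M| points, one representative of
each Λ-equivalence class p + Λ (p ∈ M), whose induced subgraph in G is connected. -/
theorem tree_of_representatives {n : ℕ}
    (b : Module.Basis (Fin n) ℝ (EuclideanSpace ℝ (Fin n)))
    (M : Finset (EuclideanSpace ℝ (Fin n))) (hMne : M.Nonempty)
    (hMU : (M : Set (EuclideanSpace ℝ (Fin n))) ⊆ unitCell b)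
    (G : SimpleGraph (EuclideanSpace ℝ (Fin n)))
    (hedge : ∀ p q, G.Adj p q → p ∈ periodicSet b ↑M ∧ q ∈ periodicSet b ↑M)
    (hper : ∀ v ∈ lat b, ∀ p q : EuclideanSpace ℝ (Fin n), G.Adj p q → G.Adj (p + v) (q + v))
    (hQC : ∀ p ∈ periodicSet b ↑M, ∀ q ∈ periodicSet b ↑M,
      ∃ v ∈ lat b, G.Reachable p (q + v)) :
    ∃ T : Finset (EuclideanSpace ℝ (Fin n)),
      T.card = M.card ∧
      (T : Set (EuclideanSpace ℝ (Fin n))) ⊆ periodicSet b ↑M ∧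
      (∀ p ∈ M, ∃! t, t ∈ T ∧ t - p ∈ lat b) ∧
      (G.induce (T : Set (EuclideanSpace ℝ (Fin n)))).Connected := by
  classical
  let V := EuclideanSpace ℝ (Fin n)
  -- being "good" for a subset M' of the motif
  let good : Finset V → Finset V → Prop := fun T M' =>
    T.card = M'.card ∧
    (T : Set V) ⊆ periodicSet b ↑M ∧
    (∀ p ∈ M', ∃! t, t ∈ T ∧ t - p ∈ lat b) ∧
    (∀ t ∈ T, ∃ p ∈ M', t - p ∈ lat b) ∧
    (G.induce (T : Set V)).Connected
  -- extension step
  have step : ∀ (M' T : Finset V), M' ⊆ M → M'.Nonempty → M' ≠ M → good T M' →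
      ∃ (M'' T' : Finset V), M'' ⊆ M ∧ M''.card = M'.card + 1 ∧ good T' M'' := by
    intro M' T hsub hne hneq hg
    obtain ⟨hcard, hTS, huniq, hall, hconn⟩ := hg
    -- a motif point not yet represented
    obtain ⟨q, hqM, hqM'⟩ := Finset.exists_of_ssubset (hsub.ssubset_of_ne hneq)
    obtain ⟨p₀, hp₀⟩ := hne
    obtain ⟨t₀, ⟨ht₀T, ht₀p₀⟩, -⟩ := huniq p₀ hp₀
    -- predicate: point lies over a represented class
    set P : V → Prop := fun s => ∃ p ∈ M', s - p ∈ lat b with hP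
    have hPt₀ : P t₀ := ⟨p₀, hp₀, ht₀p₀⟩
    -- find a walk from t₀ to a translate of q
    obtain ⟨v, hv, hreach⟩ := hQC t₀ (hTS ht₀T) q (mem_periodicSet_of_mem (by exact_mod_cast hqM))
    have hnPqv : ¬ P (q + v) := by
      rintro ⟨p, hpM', hpv⟩
      have h2 := (lat b).sub_mem hpv hv
      have e : q + v - p - v = q - p := by abel
      rw [e] at h2
      have : q = p := unitCell_inj (hMU hqM) (hMU (hsub hpM')) h2
      exact hqM' (this ▸ hpM')
    obtain ⟨a, c, hac, hPa, hnPc⟩ := walk_crossing P hreach.some hPt₀ hnPqv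
    obtain ⟨p, hpM', hap⟩ := hPa
    obtain ⟨t, ⟨htT, htp⟩, -⟩ := huniq p hpM'
    -- translate the crossing edge so its first endpoint is the representative t
    have hv' : t - a ∈ lat b := by
      have h2 := (lat b).sub_mem htp hap
      have e : t - p - (a - p) = t - a := by abel
      rwa [e] at h2
    have hadj : G.Adj t (c + (t - a)) := by
      have h2 := hper (t - a) hv' a c hac
      have e : a + (t - a) = t := by abel
      rwa [e] at h2
    set c' : V := c + (t - a) with hc'
    have hcS : c ∈ periodicSet b ↑M := (hedge a c hac).2
    have hc'S : c' ∈ periodicSet b ↑M := periodicSet_add_lat hcS hv'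
    have hnPc' : ¬ P c' := by
      rintro ⟨p', hp'M', hp'⟩
      refine hnPc ⟨p', hp'M', ?_⟩
      have h2 := (lat b).sub_mem hp' hv'
      have e : c + (t - a) - p' - (t - a) = c - p' := by abel
      rwa [e] at h2
    -- the class r of c'
    obtain ⟨l, hl, r, hrM, hclr⟩ := hcS
    have hcr : c - r ∈ lat b := by
      rw [hclr]
      have e : l + r - r = l := by abel
      rw [e]; exact hl
    have hrM' : r ∉ M' := fun h => hnPc ⟨r, h, hcr⟩
    have hc'r : c' - r ∈ lat b := by
      have h2 := (lat b).add_mem hcr hv'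
      have e : c - r + (t - a) = c' - r := by rw [hc']; abel
      rwa [e] at h2
    have hc'T : c' ∉ T := fun h => hnPc' (hall c' h)
    refine ⟨insert r M', insert c' T, Finset.insert_subset hrM hsub,
      Finset.card_insert_of_notMem hrM', ?_, ?_, ?_, ?_, ?_⟩
    · rw [Finset.card_insert_of_notMem hc'T, Finset.card_insert_of_notMem hrM', hcard]
    · intro x hx
      rcases Finset.mem_insert.mp (by exact_mod_cast hx) with rfl | h
      · exact hc'S
      · exact hTS h
    · intro p' hp'
      rcases Finset.mem_insert.mp hp' with rfl | hp'M'
      · refine ⟨c', ⟨Finset.mem_insert_self _ _, hc'r⟩, ?_⟩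
        rintro t' ⟨ht'T, ht'r⟩
        rcases Finset.mem_insert.mp ht'T with rfl | ht'T
        · rfl
        · exfalso
          obtain ⟨p'', hp''M', ht'p''⟩ := hall t' ht'T
          have h2 := (lat b).sub_mem ht'r ht'p''
          have e : t' - p' - (t' - p'') = p'' - p' := by abel
          rw [e] at h2
          have : p'' = p' := unitCell_inj (hMU (hsub hp''M')) (hMU hrM) h2
          exact hrM' (this ▸ hp''M')
      · obtain ⟨t'', ⟨ht''T, ht''p⟩, hu⟩ := huniq p' hp'M'
        refine ⟨t'', ⟨Finset.mem_insert_of_mem ht''T, ht''p⟩, ?_⟩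
        rintro t' ⟨ht'T, ht'p⟩
        rcases Finset.mem_insert.mp ht'T with rfl | ht'T
        · exact absurd ⟨p', hp'M', ht'p⟩ hnPc'
        · exact hu t' ⟨ht'T, ht'p⟩
    · intro t' ht'
      rcases Finset.mem_insert.mp ht' with rfl | ht'
      · exact ⟨r, Finset.mem_insert_self _ _, hc'r⟩
      · obtain ⟨p', hp'M', h⟩ := hall t' ht'
        exact ⟨p', Finset.mem_insert_of_mem hp'M', h⟩
    · rw [Finset.coe_insert]
      exact induce_insert_connected hconn (Finset.mem_coe.mpr htT) hadj.symm
  -- main induction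
  obtain ⟨p₀, hp₀⟩ := hMne
  have base : good {p₀} {p₀} := by
    refine ⟨rfl, ?_, ?_, ?_, ?_⟩
    · intro x hx
      have hx' : x = p₀ := by simpa using hx
      exact hx' ▸ mem_periodicSet_of_mem (by exact_mod_cast hp₀)
    · intro p hp
      have hpp : p = p₀ := Finset.mem_singleton.mp hp
      subst hpp
      exact ⟨p, ⟨Finset.mem_singleton_self p, by simp⟩,
        fun t' ht' => Finset.mem_singleton.mp ht'.1⟩
    · intro t ht
      exact ⟨p₀, Finset.mem_singleton_self _,
        Finset.mem_singleton.mp ht ▸ (by simp)⟩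
    · haveI : Nonempty (({p₀} : Finset V) : Set V) := ⟨⟨p₀, by simp⟩⟩
      refine SimpleGraph.Connected.mk fun u v => ?_
      have hu : u.1 = p₀ := by have := u.2; simpa using this
      have hv : v.1 = p₀ := by have := v.2; simpa using this
      have huv : u = v := Subtype.ext (hu.trans hv.symm)
      rw [huv]
  have key : ∀ j (M' T : Finset V), M' ⊆ M → M'.Nonempty → good T M' →
      M.card ≤ M'.card + j → ∃ T', good T' M := by
    intro j
    induction j with
    | zero =>
      intro M' T hsub hne hg hle
      have hMM : M' = M := Finset.eq_of_subset_of_card_le hsub (by omega)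
      exact ⟨T, hMM ▸ hg⟩
    | succ j ih =>
      intro M' T hsub hne hg hle
      by_cases heq : M' = M
      · exact ⟨T, heq ▸ hg⟩
      · obtain ⟨M'', T', hsub'', hcard'', hg''⟩ := step M' T hsub hne heq hg
        exact ih M'' T' hsub'' (Finset.card_pos.mp (by omega)) hg'' (by omega)
  obtain ⟨T, hg⟩ := key M.card {p₀} {p₀} (Finset.singleton_subset_iff.mpr hp₀)
    (Finset.singleton_nonempty p₀) base (by simp)
  exact ⟨T, hg.1, hg.2.1, hg.2.2.1, hg.2.2.2.2⟩
end
end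

section
/- Let S = Λ + M be a periodic point set in ℝ^n. Then the bridge length β(S) equals the minimum real number δ ≥ 0 such that the graph G_δ on S, in which two distinct points p, q ∈ S are adjacent if and only if |p − q| ≤ δ, satisfies both: (QC) for all p, q ∈ S there exists v ∈ Λ such that p and q + v are joined by a path in G_δ, and (TS) the subgroup of Λ generated by {v ∈ Λ : there exists p ∈ S with p and p + v joined by a path in G_δ} equals Λ. -/
noncomputable section

/-- `δ` bridges `S`: any two points of `S` are joined by a finite sequence of points of `S`
with consecutive distances at most `δ`. -/
def Bridges {n : ℕ} (δ : ℝ) (S : Set (EuclideanSpace ℝ (Fin n))) : Prop :=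
  ∀ p ∈ S, ∀ q ∈ S, ∃ k : ℕ, ∃ f : Fin (k + 1) → EuclideanSpace ℝ (Fin n),
    f 0 = p ∧ f (Fin.last k) = q ∧ (∀ i, f i ∈ S) ∧
    ∀ i : Fin k, dist (f i.castSucc) (f i.succ) ≤ δ

/-- The bridge length β(S): the infimum of all δ ≥ 0 that bridge S. -/
def bridgeLength {n : ℕ} (S : Set (EuclideanSpace ℝ (Fin n))) : ℝ :=
  sInf {δ : ℝ | 0 ≤ δ ∧ Bridges δ S}

/-- The graph G_δ on S in which two distinct points p, q ∈ S are adjacent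
iff |p − q| ≤ δ. -/
def proxGraph {n : ℕ} (S : Set (EuclideanSpace ℝ (Fin n))) (δ : ℝ) :
    SimpleGraph (EuclideanSpace ℝ (Fin n)) :=
  SimpleGraph.fromRel (fun p q => p ∈ S ∧ q ∈ S ∧ dist p q ≤ δ)

namespace BridgeAux

variable {n : ℕ} {b : Module.Basis (Fin n) ℝ (EuclideanSpace ℝ (Fin n))}
  {M : Set (EuclideanSpace ℝ (Fin n))}

local notation "E" => EuclideanSpace ℝ (Fin n)

lemma mem_periodic_add {x w : E} (hx : x ∈ periodicSet b M) (hw : w ∈ lat b) :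
    x + w ∈ periodicSet b M := by
  obtain ⟨l, hl, p, hp, rfl⟩ := hx
  exact ⟨l + w, add_mem hl hw, p, hp, by abel⟩

lemma prox_adj_iff {S : Set E} {δ : ℝ} {x y : E} :
    (proxGraph S δ).Adj x y ↔ x ≠ y ∧ x ∈ S ∧ y ∈ S ∧ dist x y ≤ δ := by
  rw [proxGraph, SimpleGraph.fromRel_adj]
  constructor
  · rintro ⟨hne, h | h⟩
    · exact ⟨hne, h.1, h.2.1, h.2.2⟩
    · exact ⟨hne, h.2.1, h.1, by rw [dist_comm]; exact h.2.2⟩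
  · rintro ⟨hne, hx, hy, hd⟩
    exact ⟨hne, Or.inl ⟨hx, hy, hd⟩⟩

lemma reach_add {δ : ℝ} {x y w : E} (hw : w ∈ lat b)
    (h : (proxGraph (periodicSet b M) δ).Reachable x y) :
    (proxGraph (periodicSet b M) δ).Reachable (x + w) (y + w) := by
  obtain ⟨p⟩ := h
  induction p with
  | nil => exact SimpleGraph.Reachable.refl _
  | @cons u v z h p ih =>
    refine SimpleGraph.Reachable.trans ?_ ih
    rw [prox_adj_iff] at h
    refine (SimpleGraph.Adj.reachable ?_)
    rw [prox_adj_iff]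
    exact ⟨fun he => h.1 (by exact add_right_cancel he),
      mem_periodic_add h.2.1 hw, mem_periodic_add h.2.2.1 hw,
      by rw [dist_add_right]; exact h.2.2.2⟩

lemma bridges_iff {S : Set E} {δ : ℝ} :
    Bridges δ S ↔ ∀ p ∈ S, ∀ q ∈ S, (proxGraph S δ).Reachable p q := by
  constructor
  · intro h p hp q hq
    obtain ⟨k, f, h0, hl, hmem, hd⟩ := h p hp q hq
    have H : ∀ i : Fin (k + 1), (proxGraph S δ).Reachable (f 0) (f i) := by
      intro i
      induction i using Fin.induction with
      | zero => exact SimpleGraph.Reachable.refl _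
      | succ i ih =>
        rcases eq_or_ne (f i.castSucc) (f i.succ) with he | hne
        · rwa [← he]
        · exact ih.trans (SimpleGraph.Adj.reachable
            (prox_adj_iff.mpr ⟨hne, hmem _, hmem _, hd i⟩))
    rw [← h0, ← hl]; exact H (Fin.last k)
  · intro h p hp q hq
    obtain ⟨w⟩ := h p hp q hq
    refine ⟨w.length, fun i => w.getVert i, w.getVert_zero, ?_, ?_, ?_⟩
    · simp [Fin.last]
    · intro i
      rcases Nat.lt_or_ge (i : ℕ) w.length with hi | hi
      · exact (prox_adj_iff.mp (w.adj_getVert_succ hi)).2.1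
      · have : (i : ℕ) = w.length := le_antisymm (Nat.lt_succ_iff.mp i.isLt) hi
        show w.getVert (i : ℕ) ∈ S
        rw [this, w.getVert_length]; exact hq
    · intro i
      have h' := prox_adj_iff.mp (w.adj_getVert_succ i.isLt)
      simpa [Fin.coe_castSucc, Fin.val_succ] using h'.2.2.2

/-- The subgroup of periods `w` of `Λ` such that every point of `S` is joined to its
translate by `w` in `G_δ`. -/
def periodSub (b : Module.Basis (Fin n) ℝ (EuclideanSpace ℝ (Fin n)))
    (M : Set (EuclideanSpace ℝ (Fin n))) (δ : ℝ) : AddSubgroup (EuclideanSpace ℝ (Fin n)) where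
  carrier := {w | w ∈ lat b ∧ ∀ x ∈ periodicSet b M,
    (proxGraph (periodicSet b M) δ).Reachable x (x + w)}
  zero_mem' := ⟨zero_mem _, fun x _ => by rw [add_zero]⟩
  add_mem' := by
    rintro a c ⟨ha, hra⟩ ⟨hc, hrc⟩
    refine ⟨add_mem ha hc, fun x hx => ?_⟩
    have h1 := hra x hx
    have h2 := hrc (x + a) (mem_periodic_add hx ha)
    rw [add_assoc] at h2
    exact h1.trans h2
  neg_mem' := by
    rintro a ⟨ha, hra⟩
    refine ⟨neg_mem ha, fun x hx => ?_⟩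
    have h1 := hra (x + -a) (mem_periodic_add hx (neg_mem ha))
    rw [neg_add_cancel_right] at h1
    exact h1.symm

lemma lat_le_periodSub {δ : ℝ}
    (hgen : ∀ i, (b : Fin n → E) i ∈ periodSub b M δ) :
    ∀ w ∈ lat b, w ∈ periodSub b M δ := by
  intro w hw
  have : lat b ≤ AddSubgroup.toIntSubmodule (periodSub b M δ) := by
    rw [lat]
    refine Submodule.span_le.mpr ?_
    rintro _ ⟨i, rfl⟩
    exact hgen i
  exact this hw


section part2
lemma mem_periodic_of_mem {m : E} (hm : m ∈ M) : m ∈ periodicSet b M :=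
  ⟨0, zero_mem _, m, hm, (zero_add m).symm⟩

/-- (QC) and (TS) imply bridging. -/
lemma bridges_of_QC_TS {δ : ℝ}
    (hQC : ∀ p ∈ periodicSet b M, ∀ q ∈ periodicSet b M,
      ∃ v ∈ lat b, (proxGraph (periodicSet b M) δ).Reachable p (q + v))
    (hTS : Submodule.span ℤ {v : E | v ∈ lat b ∧
      ∃ p ∈ periodicSet b M,
        (proxGraph (periodicSet b M) δ).Reachable p (p + v)} = lat b) :
    Bridges δ (periodicSet b M) := by
  set S := periodicSet b M with hS
  set G := proxGraph (periodicSet b M) δ with hG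
  -- every generator of the TS set is a global period
  have hTsub : {v : E | v ∈ lat b ∧ ∃ p ∈ S, G.Reachable p (p + v)} ⊆
      (periodSub b M δ : Set E) := by
    rintro v ⟨hv, p, hp, hpv⟩
    refine ⟨hv, fun x hx => ?_⟩
    obtain ⟨u, hu, hxu⟩ := hQC x hx p hp
    have h1 : G.Reachable (p + u) (p + v + u) := reach_add hu hpv
    have h2 : G.Reachable (x + v) (p + u + v) := reach_add hv hxu
    have h3 : p + v + u = p + u + v := by abel
    rw [h3] at h1
    exact (hxu.trans h1).trans h2.symm
  have hall : ∀ w ∈ lat b, ∀ x ∈ S, G.Reachable x (x + w) := by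
    intro w hw
    have hle : lat b ≤ AddSubgroup.toIntSubmodule (periodSub b M δ) := by
      rw [← hTS]
      refine Submodule.span_le.mpr ?_
      rw [AddSubgroup.coe_toIntSubmodule]
      exact hTsub
    exact (hle hw).2
  rw [bridges_iff]
  intro p hp q hq
  obtain ⟨v, hv, hpv⟩ := hQC p hp q hq
  exact hpv.trans (hall v hv q hq).symm

/-- Bridging implies (QC) and (TS). -/
lemma QC_TS_of_bridges {δ : ℝ} (hMne : M.Nonempty)
    (hB : Bridges δ (periodicSet b M)) :
    (∀ p ∈ periodicSet b M, ∀ q ∈ periodicSet b M,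
      ∃ v ∈ lat b, (proxGraph (periodicSet b M) δ).Reachable p (q + v)) ∧
    Submodule.span ℤ {v : E | v ∈ lat b ∧
      ∃ p ∈ periodicSet b M,
        (proxGraph (periodicSet b M) δ).Reachable p (p + v)} = lat b := by
  rw [bridges_iff] at hB
  constructor
  · intro p hp q hq
    refine ⟨0, zero_mem _, ?_⟩
    rw [add_zero]
    exact hB p hp q hq
  · obtain ⟨m, hm⟩ := hMne
    have hmS : m ∈ periodicSet b M := mem_periodic_of_mem hm
    refine le_antisymm (Submodule.span_le.mpr ?_) ?_
    · rintro v ⟨hv, -⟩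
      exact hv
    rw [lat]
    refine Submodule.span_le.mpr ?_
    rintro _ ⟨i, rfl⟩
    refine Submodule.subset_span ⟨Submodule.subset_span ⟨i, rfl⟩, m, hmS, ?_⟩
    exact hB m hmS (m + b i) (mem_periodic_add hmS (Submodule.subset_span ⟨i, rfl⟩))

end part2

section part3

/-- Some δ bridges S. -/
lemma exists_bridges (hMfin : M.Finite) (hMne : M.Nonempty) :
    ∃ δ : ℝ, 0 ≤ δ ∧ Bridges δ (periodicSet b M) := by
  obtain ⟨m₀, hm₀⟩ := hMne
  obtain ⟨C, hC⟩ := Metric.isBounded_iff.mp hMfin.isBounded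
  have hC0 : 0 ≤ C := by simpa using hC hm₀ hm₀
  set B : ℝ := ∑ i, ‖(b : Fin n → E) i‖ with hBdef
  have hB0 : 0 ≤ B := Finset.sum_nonneg fun i _ => norm_nonneg _
  refine ⟨C + B, by linarith, ?_⟩
  have hgen : ∀ i, (b : Fin n → E) i ∈ periodSub b M (C + B) := by
    intro i
    have hbi : (b : Fin n → E) i ∈ lat b := Submodule.subset_span ⟨i, rfl⟩
    refine ⟨hbi, fun x hx => ?_⟩
    have hne : x ≠ x + b i := by
      intro h
      exact b.ne_zero i (left_eq_add.mp h)
    refine SimpleGraph.Adj.reachable (prox_adj_iff.mpr ⟨hne, hx, mem_periodic_add hx hbi, ?_⟩)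
    have h1 : dist x (x + b i) = ‖(b : Fin n → E) i‖ := by
      rw [dist_eq_norm']
      congr 1
      abel
    rw [h1]
    have h2 : ‖(b : Fin n → E) i‖ ≤ B :=
      Finset.single_le_sum (fun j _ => norm_nonneg _) (Finset.mem_univ i)
    linarith
  have hall : ∀ w ∈ lat b, w ∈ periodSub b M (C + B) := lat_le_periodSub hgen
  rw [bridges_iff]
  rintro p ⟨l, hl, mp, hmp, rfl⟩ q ⟨l', hl', mq, hmq, rfl⟩
  have hlS : l + mp ∈ periodicSet b M := ⟨l, hl, mp, hmp, rfl⟩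
  have hlS' : l + mq ∈ periodicSet b M := ⟨l, hl, mq, hmq, rfl⟩
  have step1 : (proxGraph (periodicSet b M) (C + B)).Reachable (l + mp) (l + mq) := by
    rcases eq_or_ne (l + mp) (l + mq) with he | hne
    · rw [he]
    · refine SimpleGraph.Adj.reachable (prox_adj_iff.mpr ⟨hne, hlS, hlS', ?_⟩)
      rw [dist_add_left]
      have := hC hmp hmq
      linarith
  have step2 : (proxGraph (periodicSet b M) (C + B)).Reachable (l + mq) (l' + mq) := by
    have h := (hall (l' - l) (sub_mem hl' hl)).2 (l + mq) hlS'
    have he : l + mq + (l' - l) = l' + mq := by abel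
    rwa [he] at h
  exact step1.trans step2

/-- The set of realized distances below any bound is finite. -/
lemma finite_dists (hMfin : M.Finite) (C : ℝ) :
    {d : ℝ | ∃ p ∈ periodicSet b M, ∃ q ∈ periodicSet b M, dist p q = d ∧ d ≤ C}.Finite := by
  obtain ⟨C', hC'⟩ := Metric.isBounded_iff.mp hMfin.isBounded
  have hdisc : DiscreteTopology (Submodule.span ℤ (Set.range (b : Fin n → E))) :=
    inferInstance
  have hdisc' : DiscreteTopology ((lat b : Set E) : Set E) := by
    rw [lat]; exact hdisc
  have hclosed : IsClosed (lat b : Set E) := by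
    have : DiscreteTopology ((lat b).toAddSubgroup) := hdisc'
    exact AddSubgroup.isClosed_of_discrete (H := (lat b).toAddSubgroup)
  have hcpt : IsCompact ((lat b : Set E) ∩ Metric.closedBall 0 (C + C')) :=
    (isCompact_closedBall (0 : E) (C + C')).inter_left hclosed
  have hF1 : ((lat b : Set E) ∩ Metric.closedBall 0 (C + C')).Finite := by
    have : DiscreteTopology ((lat b : Set E) ∩ Metric.closedBall 0 (C + C') : Set E) :=
      DiscreteTopology.of_subset hdisc' Set.inter_subset_left
    exact hcpt.finite (isDiscrete_iff_discreteTopology.mpr this)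
  have hsub : {d : ℝ | ∃ p ∈ periodicSet b M, ∃ q ∈ periodicSet b M, dist p q = d ∧ d ≤ C} ⊆
      (fun x : E × E × E => ‖x.1 + (x.2.1 - x.2.2)‖) ''
        (((lat b : Set E) ∩ Metric.closedBall 0 (C + C')) ×ˢ (M ×ˢ M)) := by
    rintro d ⟨p, ⟨l, hl, mp, hmp, rfl⟩, q, ⟨l', hl', mq, hmq, rfl⟩, rfl, hdC⟩
    have hdeq : dist (l + mp) (l' + mq) = ‖(l - l') + (mp - mq)‖ := by
      rw [dist_eq_norm]
      congr 1
      abel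
    have hmm : ‖mp - mq‖ ≤ C' := by
      rw [← dist_eq_norm]
      exact hC' hmp hmq
    have hll : ‖l - l'‖ ≤ C + C' := by
      have h1 : ‖l - l'‖ ≤ ‖(l - l') + (mp - mq)‖ + ‖mp - mq‖ := by
        have := norm_sub_le ((l - l') + (mp - mq)) (mp - mq)
        simpa using this
      rw [← hdeq] at h1
      linarith
    refine ⟨⟨l - l', mp, mq⟩, ⟨⟨sub_mem hl hl', ?_⟩, hmp, hmq⟩, hdeq.symm⟩
    simpa [Metric.mem_closedBall, dist_zero_right] using hll
  exact Set.Finite.subset (Set.Finite.image _ (hF1.prod (hMfin.prod hMfin))) hsub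

end part3

section part4

/-- The bridge length is attained: it is nonnegative and bridges S. -/
lemma bridgeLength_attained (hMfin : M.Finite) (hMne : M.Nonempty) :
    0 ≤ bridgeLength (periodicSet b M) ∧
      Bridges (bridgeLength (periodicSet b M)) (periodicSet b M) := by
  set S := periodicSet b M with hSdef
  set Bset := {δ : ℝ | 0 ≤ δ ∧ Bridges δ S} with hBdef
  have hne : Bset.Nonempty := by
    obtain ⟨δ, h1, h2⟩ := exists_bridges (b := b) hMfin hMne
    exact ⟨δ, h1, h2⟩
  have hbdd : BddBelow Bset := ⟨0, fun δ hδ => hδ.1⟩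
  have hβ0 : 0 ≤ sInf Bset := le_csInf hne fun δ hδ => hδ.1
  have hβeq : bridgeLength S = sInf Bset := rfl
  set β := sInf Bset with hβdef
  have hF : {d : ℝ | ∃ p ∈ S, ∃ q ∈ S, dist p q = d ∧ d ≤ β + 1}.Finite :=
    finite_dists hMfin (β + 1)
  set F' := {d : ℝ | (∃ p ∈ S, ∃ q ∈ S, dist p q = d ∧ d ≤ β + 1) ∧ β < d} with hF'def
  have hF'fin : F'.Finite := hF.subset fun d hd => hd.1
  have hεex : ∃ ε : ℝ, 0 < ε ∧ ε ≤ 1 ∧ ∀ d ∈ F', β + ε ≤ d := by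
    rcases F'.eq_empty_or_nonempty with he | hne'
    · refine ⟨1, one_pos, le_refl 1, ?_⟩
      intro d hd
      rw [he] at hd
      exact absurd hd (Set.notMem_empty d)
    · obtain ⟨d₀, hd₀, hmin⟩ := Set.exists_min_image F' id hF'fin hne'
      refine ⟨min (d₀ - β) 1, lt_min (by linarith [hd₀.2]) one_pos, min_le_right _ _, ?_⟩
      intro d hd
      have h1 : d₀ ≤ d := hmin d hd
      have h2 : min (d₀ - β) 1 ≤ d₀ - β := min_le_left _ _
      linarith
  obtain ⟨ε, hε0, hε1, hεF⟩ := hεex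
  have hslt : sInf Bset < β + ε := by rw [← hβdef]; linarith
  obtain ⟨δ, hδB, hδlt⟩ := exists_lt_of_csInf_lt hne hslt
  have hβδ : β ≤ δ := csInf_le hbdd hδB
  rw [hβeq]
  refine ⟨hβ0, ?_⟩
  intro p hp q hq
  obtain ⟨k, f, h0, hl, hmem, hd⟩ := hδB.2 p hp q hq
  refine ⟨k, f, h0, hl, hmem, fun i => ?_⟩
  by_contra hcon
  push_neg at hcon
  have hdδ : dist (f i.castSucc) (f i.succ) ≤ δ := hd i
  have hdF' : dist (f i.castSucc) (f i.succ) ∈ F' :=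
    ⟨⟨_, hmem _, _, hmem _, rfl, by linarith⟩, hcon⟩
  have := hεF _ hdF'
  linarith

end part4
end BridgeAux

/-- β(S) equals the minimum δ ≥ 0 such that the graph G_δ on S satisfies
both termination conditions (QC) and (TS) of the bridge-length algorithm. -/
theorem bridgeLength_eq_min_delta {n : ℕ}
    (b : Module.Basis (Fin n) ℝ (EuclideanSpace ℝ (Fin n)))
    (M : Set (EuclideanSpace ℝ (Fin n))) (hMfin : M.Finite) (hMne : M.Nonempty)
    (hMU : M ⊆ unitCell b) :
    IsLeast {δ : ℝ | 0 ≤ δ ∧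
        (∀ p ∈ periodicSet b M, ∀ q ∈ periodicSet b M,
          ∃ v ∈ lat b, (proxGraph (periodicSet b M) δ).Reachable p (q + v)) ∧
        Submodule.span ℤ {v : EuclideanSpace ℝ (Fin n) | v ∈ lat b ∧
          ∃ p ∈ periodicSet b M,
            (proxGraph (periodicSet b M) δ).Reachable p (p + v)} = lat b}
      (bridgeLength (periodicSet b M)) := by
  obtain ⟨h0, hB⟩ := BridgeAux.bridgeLength_attained (b := b) hMfin hMne
  constructor
  · obtain ⟨hQC, hTS⟩ := BridgeAux.QC_TS_of_bridges hMne hB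
    exact ⟨h0, hQC, hTS⟩
  · rintro δ ⟨hδ0, hQC, hTS⟩
    exact csInf_le ⟨0, fun x hx => hx.1⟩ ⟨hδ0, BridgeAux.bridges_of_QC_TS hQC hTS⟩
end
end

section
/- Let S = Λ + M be a nonempty periodic point set in ℝ^n. Then the bridge length β(S) equals the infimum of all numbers 2r > 0 such that the union of the closed balls of radius r centred at all points of S is a connected subset of ℝ^n. -/
noncomputable section

section Aux

open Metric Set Relation

variable {n : ℕ}

local notation "E" => EuclideanSpace ℝ (Fin n)

/-- One step of a bridge chain. -/
def stepRel (δ : ℝ) (S : Set (EuclideanSpace ℝ (Fin n))) (x y : EuclideanSpace ℝ (Fin n)) :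
    Prop :=
  x ∈ S ∧ y ∈ S ∧ dist x y ≤ δ

lemma stepRel_symm {δ : ℝ} {S : Set (EuclideanSpace ℝ (Fin n))} :
    Symmetric (stepRel δ S) := fun _ _ h => ⟨h.2.1, h.1, by rw [dist_comm]; exact h.2.2⟩

lemma chain_of_rtg {δ : ℝ} {S : Set (EuclideanSpace ℝ (Fin n))} {p q : EuclideanSpace ℝ (Fin n)}
    (hp : p ∈ S) (h : Relation.ReflTransGen (stepRel δ S) p q) :
    ∃ k : ℕ, ∃ f : Fin (k + 1) → EuclideanSpace ℝ (Fin n),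
      f 0 = p ∧ f (Fin.last k) = q ∧ (∀ i, f i ∈ S) ∧
      ∀ i : Fin k, dist (f i.castSucc) (f i.succ) ≤ δ := by
  induction h with
  | refl => exact ⟨0, fun _ => p, rfl, rfl, fun _ => hp, fun i => i.elim0⟩
  | @tail c d hpc hcd ih =>
      obtain ⟨k, f, h0, hl, hmem, hd⟩ := ih
      refine ⟨k + 1, Fin.snoc f d, ?_, ?_, ?_, ?_⟩
      · rw [show (0 : Fin (k + 2)) = Fin.castSucc 0 from rfl, Fin.snoc_castSucc]; exact h0
      · rw [Fin.snoc_last]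
      · intro i
        refine Fin.lastCases ?_ ?_ i
        · rw [Fin.snoc_last]; exact hcd.2.1
        · intro j; rw [Fin.snoc_castSucc]; exact hmem j
      · intro i
        refine Fin.lastCases ?_ ?_ i
        · rw [Fin.succ_last, Fin.snoc_last, Fin.snoc_castSucc, hl]
          exact hcd.2.2
        · intro j
          rw [Fin.succ_castSucc, Fin.snoc_castSucc, Fin.snoc_castSucc]
          exact hd j
  
lemma rtg_of_chain {δ : ℝ} {S : Set (EuclideanSpace ℝ (Fin n))} :
    ∀ (k : ℕ) (f : Fin (k + 1) → EuclideanSpace ℝ (Fin n)), (∀ i, f i ∈ S) →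
      (∀ i : Fin k, dist (f i.castSucc) (f i.succ) ≤ δ) →
      Relation.ReflTransGen (stepRel δ S) (f 0) (f (Fin.last k)) := by
  intro k
  induction k with
  | zero => intro f _ _; rw [show Fin.last 0 = 0 from rfl]
  | succ k ih =>
      intro f hmem hd
      have h1 : Relation.ReflTransGen (stepRel δ S) (f 0) (f ((Fin.last k).castSucc)) := by
        have := ih (f ∘ Fin.castSucc) (fun i => hmem _)
          (fun i => by
            show dist (f (i.castSucc.castSucc)) (f (i.succ.castSucc)) ≤ δ
            rw [← Fin.succ_castSucc]
            exact hd i.castSucc)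
        simpa using this
      refine h1.tail ?_
      have := hd (Fin.last k)
      rw [Fin.succ_last] at this
      exact ⟨hmem _, hmem _, this⟩

lemma mem_periodicSet {b : Module.Basis (Fin n) ℝ (EuclideanSpace ℝ (Fin n))}
    {M : Set (EuclideanSpace ℝ (Fin n))} {l m : EuclideanSpace ℝ (Fin n)}
    (hl : l ∈ lat b) (hm : m ∈ M) : l + m ∈ periodicSet b M :=
  ⟨l, hl, m, hm, rfl⟩

/-- Existence of a bridging constant for a periodic set. -/
lemma exists_bridges (b : Module.Basis (Fin n) ℝ (EuclideanSpace ℝ (Fin n)))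
    (M : Set (EuclideanSpace ℝ (Fin n))) (hMfin : M.Finite) :
    ∃ δ : ℝ, 0 ≤ δ ∧ Bridges δ (periodicSet b M) := by
  classical
  set S := periodicSet b M with hS
  set δ0 : ℝ := Metric.diam M + ∑ i : Fin n, ‖b i‖ with hδ0
  have hsum : (0:ℝ) ≤ ∑ i : Fin n, ‖b i‖ :=
    Finset.sum_nonneg fun i _ => norm_nonneg _
  have hδ0nn : 0 ≤ δ0 := add_nonneg Metric.diam_nonneg hsum
  refine ⟨δ0, hδ0nn, ?_⟩
  set Q : EuclideanSpace ℝ (Fin n) → Prop := fun v =>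
    ∀ l ∈ lat b, ∀ m ∈ M, Relation.ReflTransGen (stepRel δ0 S) (l + m) (l + v + m) with hQ
  have hQ0 : Q 0 := by
    intro l _ m _
    rw [add_zero]
  have hQadd : ∀ x y, x ∈ lat b → Q x → Q y → Q (x + y) := by
    intro x y hx qx qy l hl m hm
    have h1 := qx l hl m hm
    have h2 := qy (l + x) (add_mem hl hx) m hm
    rw [show l + x + y + m = l + (x + y) + m by abel] at h2
    exact h1.trans h2
  have hQneg : ∀ x, x ∈ lat b → Q x → Q (-x) := by
    intro x hx qx l hl m hm
    have h := qx (l + -x) (add_mem hl (neg_mem hx)) m hm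
    rw [show l + -x + x + m = l + m by abel] at h
    exact (@Relation.ReflTransGen.stdSymm _ _ ⟨fun _ _ h' => stepRel_symm h'⟩).symm _ _ h
  have hQsmul : ∀ (a : ℤ) (x), x ∈ lat b → Q x → Q (a • x) := by
    intro a x hx qx
    induction a using Int.induction_on with
    | zero => rw [zero_smul]; exact hQ0
    | succ i ih =>
        have := hQadd (((i : ℤ)) • x) x (Submodule.smul_mem _ ((i : ℤ)) hx) ih qx
        rwa [show ((i : ℤ) + 1) • x = ((i : ℤ)) • x + x by rw [add_smul, one_smul]]
    | pred i ih =>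
        have := hQadd ((-(i : ℤ)) • x) (-x) (Submodule.smul_mem _ (-(i : ℤ)) hx) ih
          (hQneg x hx qx)
        rwa [show (-(i : ℤ) - 1) • x = (-(i : ℤ)) • x + -x by
          rw [sub_smul, one_smul, sub_eq_add_neg]]
  have hQall : ∀ v ∈ lat b, Q v := by
    intro v hv
    refine Submodule.span_induction (p := fun v _ => Q v) ?_ hQ0
      (fun x y hx _ qx qy => hQadd x y hx qx qy)
      (fun a x hx qx => hQsmul a x hx qx) hv
    · rintro x ⟨i, rfl⟩ l hl m hm
      refine Relation.ReflTransGen.single ⟨mem_periodicSet hl hm,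
        mem_periodicSet (add_mem hl (Submodule.subset_span ⟨i, rfl⟩)) hm, ?_⟩
      have : dist (l + m) (l + b i + m) = ‖b i‖ := by
        rw [dist_eq_norm, show l + m - (l + b i + m) = -(b i) by abel, norm_neg]
      rw [this]
      have : ‖b i‖ ≤ ∑ j : Fin n, ‖b j‖ :=
        Finset.single_le_sum (fun j _ => norm_nonneg (b j)) (Finset.mem_univ i)
      have hd := Metric.diam_nonneg (s := M)
      linarith
  rintro p ⟨l, hl, m, hm, rfl⟩ q ⟨l', hl', m', hm', rfl⟩
  have h1 := hQall (l' - l) (sub_mem hl' hl) l hl m hm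
  rw [show l + (l' - l) + m = l' + m by abel] at h1
  have h2 : Relation.ReflTransGen (stepRel δ0 S) (l + m) (l' + m') := by
    refine h1.tail ⟨mem_periodicSet hl' hm, mem_periodicSet hl' hm', ?_⟩
    rw [dist_add_left]
    have := Metric.dist_le_diam_of_mem hMfin.isBounded hm hm'
    linarith
  exact chain_of_rtg (mem_periodicSet hl hm) h2

/-- Local finiteness of a periodic set. -/
lemma periodicSet_finite_inter (b : Module.Basis (Fin n) ℝ (EuclideanSpace ℝ (Fin n)))
    {M : Set (EuclideanSpace ℝ (Fin n))} (hMfin : M.Finite)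
    (z : EuclideanSpace ℝ (Fin n)) (R : ℝ) :
    {x ∈ periodicSet b M | dist x z ≤ R}.Finite := by
  haveI : DiscreteTopology ((lat b : Set (EuclideanSpace ℝ (Fin n)))) := by
    unfold lat
    exact inferInstanceAs (DiscreteTopology (Submodule.span ℤ (Set.range ⇑b)))
  have hclosed : IsClosed ((lat b : Set (EuclideanSpace ℝ (Fin n)))) := by
    have : DiscreteTopology (lat b).toAddSubgroup := by
      unfold lat
      exact inferInstanceAs (DiscreteTopology (Submodule.span ℤ (Set.range ⇑b)).toAddSubgroup)
    exact AddSubgroup.isClosed_of_discrete (H := (lat b).toAddSubgroup)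
  have hfin : ∀ m : EuclideanSpace ℝ (Fin n),
      (Metric.closedBall (z - m) R ∩ (lat b : Set (EuclideanSpace ℝ (Fin n)))).Finite :=
    fun m => Metric.finite_isBounded_inter_isClosed (isDiscrete_iff_discreteTopology.mpr inferInstance) Metric.isBounded_closedBall hclosed
  have hsub : {x ∈ periodicSet b M | dist x z ≤ R} ⊆
      ⋃ m ∈ M, (fun l => l + m) ''
        (Metric.closedBall (z - m) R ∩ (lat b : Set (EuclideanSpace ℝ (Fin n)))) := by
    rintro x ⟨⟨l, hl, m, hm, rfl⟩, hdz⟩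
    refine Set.mem_biUnion hm ⟨l, ⟨?_, hl⟩, rfl⟩
    rw [Metric.mem_closedBall, dist_eq_norm, show l - (z - m) = l + m - z by abel,
      ← dist_eq_norm]
    exact hdz
  exact Set.Finite.subset (hMfin.biUnion fun m _ => (hfin m).image _) hsub

/-- A union of closed balls centred at a subset of a periodic set is closed. -/
lemma isClosed_biUnion_balls (b : Module.Basis (Fin n) ℝ (EuclideanSpace ℝ (Fin n)))
    {M : Set (EuclideanSpace ℝ (Fin n))} (hMfin : M.Finite)
    {S' : Set (EuclideanSpace ℝ (Fin n))} (hS' : S' ⊆ periodicSet b M) (r : ℝ) :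
    IsClosed (⋃ x ∈ S', Metric.closedBall x r) := by
  rw [← closure_subset_iff_isClosed]
  intro z hz
  set F := {x ∈ S' | dist x z ≤ r + 1} with hF
  have hFfin : F.Finite := by
    refine (periodicSet_finite_inter b hMfin z (r + 1)).subset ?_
    rintro x ⟨hx, hdx⟩
    exact ⟨hS' hx, hdx⟩
  have hFc : IsClosed (⋃ x ∈ F, Metric.closedBall x r) :=
    hFfin.isClosed_biUnion fun _ _ => Metric.isClosed_closedBall
  have hzF : z ∈ closure (⋃ x ∈ F, Metric.closedBall x r) := by
    rw [Metric.mem_closure_iff]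
    intro ε hε
    rw [Metric.mem_closure_iff] at hz
    obtain ⟨a, ha, hda⟩ := hz (min ε 1) (lt_min hε one_pos)
    obtain ⟨x, hxS', hax⟩ : ∃ x ∈ S', a ∈ Metric.closedBall x r := by
      simpa using ha
    refine ⟨a, ?_, lt_of_lt_of_le hda (min_le_left _ _)⟩
    have hxz : dist x z ≤ r + 1 := by
      have h1 : dist x a ≤ r := by rwa [Metric.mem_closedBall, dist_comm] at hax
      have h2 : dist a z ≤ 1 := by
        rw [dist_comm]
        exact le_of_lt (lt_of_lt_of_le hda (min_le_right _ _))
      calc dist x z ≤ dist x a + dist a z := dist_triangle _ _ _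
        _ ≤ r + 1 := add_le_add h1 h2
    exact Set.mem_biUnion ⟨hxS', hxz⟩ hax
  rw [hFc.closure_eq] at hzF
  exact Set.biUnion_subset_biUnion_left (fun x hx => hx.1) hzF

lemma bridges_mono {δ δ' : ℝ} {S : Set (EuclideanSpace ℝ (Fin n))} (h : δ ≤ δ')
    (hb : Bridges δ S) : Bridges δ' S := by
  intro p hp q hq
  obtain ⟨k, f, h0, hl, hmem, hd⟩ := hb p hp q hq
  exact ⟨k, f, h0, hl, hmem, fun i => (hd i).trans h⟩

lemma connected_of_bridges {S : Set (EuclideanSpace ℝ (Fin n))} {r : ℝ} (hr : 0 < r)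
    (hSne : S.Nonempty) (hb : Bridges (2 * r) S) :
    IsConnected (⋃ p ∈ S, Metric.closedBall p r) := by
  refine IsConnected.biUnion_of_reflTransGen hSne
    (fun p _ => ⟨⟨p, Metric.mem_closedBall_self hr.le⟩,
      (convex_closedBall p r).isPreconnected⟩) ?_
  intro p hp q hq
  obtain ⟨k, f, h0, hl, hmem, hd⟩ := hb p hp q hq
  have h := rtg_of_chain k f hmem hd
  rw [h0, hl] at h
  refine Relation.ReflTransGen.mono ?_ _ _ h
  rintro x y ⟨hx, hy, hxy⟩
  refine ⟨⟨midpoint ℝ x y, ?_, ?_⟩, hx⟩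
  · rw [Metric.mem_closedBall, dist_midpoint_left]
    have : ‖(2 : ℝ)‖ = 2 := by norm_num
    rw [this]
    linarith
  · rw [Metric.mem_closedBall, dist_midpoint_right]
    have : ‖(2 : ℝ)‖ = 2 := by norm_num
    rw [this]
    linarith

lemma bridges_of_connected (b : Module.Basis (Fin n) ℝ (EuclideanSpace ℝ (Fin n)))
    {M : Set (EuclideanSpace ℝ (Fin n))} (hMfin : M.Finite) {r : ℝ} (hr : 0 < r)
    (hc : IsConnected (⋃ p ∈ periodicSet b M, Metric.closedBall p r)) :
    Bridges (2 * r) (periodicSet b M) := by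
  classical
  set S := periodicSet b M with hS
  intro p hp q hq
  have key : Relation.ReflTransGen (stepRel (2 * r) S) p q := by
    by_contra hcon
    set A := ⋃ x ∈ {x ∈ S | Relation.ReflTransGen (stepRel (2 * r) S) p x},
      Metric.closedBall x r with hA
    set B := ⋃ x ∈ {x ∈ S | ¬ Relation.ReflTransGen (stepRel (2 * r) S) p x},
      Metric.closedBall x r with hB
    have hAc : IsClosed A := isClosed_biUnion_balls b hMfin (fun x hx => hx.1) r
    have hBc : IsClosed B := isClosed_biUnion_balls b hMfin (fun x hx => hx.1) r
    have hcover : (⋃ p ∈ S, Metric.closedBall p r) ⊆ A ∪ B := by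
      intro z hz
      obtain ⟨x, hxS, hxz⟩ : ∃ x ∈ S, z ∈ Metric.closedBall x r := by simpa using hz
      by_cases hx : Relation.ReflTransGen (stepRel (2 * r) S) p x
      · exact Or.inl (Set.mem_biUnion ⟨hxS, hx⟩ hxz)
      · exact Or.inr (Set.mem_biUnion ⟨hxS, hx⟩ hxz)
    have h1 : ((⋃ p ∈ S, Metric.closedBall p r) ∩ A).Nonempty :=
      ⟨p, Set.mem_biUnion hp (Metric.mem_closedBall_self hr.le),
        Set.mem_biUnion ⟨hp, Relation.ReflTransGen.refl⟩ (Metric.mem_closedBall_self hr.le)⟩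
    have h2 : ((⋃ p ∈ S, Metric.closedBall p r) ∩ B).Nonempty :=
      ⟨q, Set.mem_biUnion hq (Metric.mem_closedBall_self hr.le),
        Set.mem_biUnion ⟨hq, hcon⟩ (Metric.mem_closedBall_self hr.le)⟩
    obtain ⟨z, _, hzA, hzB⟩ :=
      isPreconnected_closed_iff.mp hc.isPreconnected A B hAc hBc hcover h1 h2
    obtain ⟨x, ⟨hxS, hxr⟩, hzx⟩ : ∃ x ∈ {x ∈ S | Relation.ReflTransGen (stepRel (2 * r) S) p x},
        z ∈ Metric.closedBall x r := by simpa [hA] using hzA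
    obtain ⟨y, ⟨hyS, hyr⟩, hzy⟩ : ∃ y ∈ {x ∈ S | ¬ Relation.ReflTransGen (stepRel (2 * r) S) p x},
        z ∈ Metric.closedBall y r := by simpa [hB] using hzB
    have hxy : dist x y ≤ 2 * r := by
      have h1 : dist x z ≤ r := by rwa [Metric.mem_closedBall, dist_comm] at hzx
      have h2 : dist z y ≤ r := by rwa [Metric.mem_closedBall] at hzy
      calc dist x y ≤ dist x z + dist z y := dist_triangle _ _ _
        _ ≤ 2 * r := by linarith
    exact hyr (hxr.tail ⟨hxS, hyS, hxy⟩)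
  exact chain_of_rtg hp key

end Aux

/-- For a nonempty periodic point set S = Λ + M in ℝ^n, the bridge length
β(S) equals the infimum of all numbers 2r > 0 such that the union of the closed balls of
radius r centred at all points of S is a connected subset of ℝ^n. -/
theorem bridgeLength_eq_inf_connected_balls {n : ℕ}
    (b : Module.Basis (Fin n) ℝ (EuclideanSpace ℝ (Fin n)))
    (M : Set (EuclideanSpace ℝ (Fin n))) (hMfin : M.Finite) (hMne : M.Nonempty)
    (hMU : M ⊆ unitCell b) :
    bridgeLength (periodicSet b M) =
      sInf {d : ℝ | ∃ r : ℝ, 0 < r ∧ d = 2 * r ∧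
        IsConnected (⋃ p ∈ periodicSet b M, Metric.closedBall p r)} := by
  classical
  set S := periodicSet b M with hS
  set T := {d : ℝ | ∃ r : ℝ, 0 < r ∧ d = 2 * r ∧
    IsConnected (⋃ p ∈ S, Metric.closedBall p r)} with hT
  set Bset := {δ : ℝ | 0 ≤ δ ∧ Bridges δ S} with hBset
  obtain ⟨m0, hm0⟩ := hMne
  have hSne : S.Nonempty := ⟨0 + m0, mem_periodicSet (zero_mem _) hm0⟩
  obtain ⟨δ0, hδ0, hbr⟩ := exists_bridges b M hMfin
  have hBne : Bset.Nonempty := ⟨δ0, hδ0, hbr⟩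
  have hBbd : BddBelow Bset := ⟨0, fun δ hδ => hδ.1⟩
  have hTbd : BddBelow T := ⟨0, by rintro d ⟨r, hr, rfl, _⟩; linarith⟩
  have hmemT : ∀ δ ∈ Bset, ∀ ε : ℝ, 0 < ε → δ + ε ∈ T := by
    rintro δ ⟨hδnn, hδbr⟩ ε hε
    refine ⟨(δ + ε) / 2, by linarith, by ring, ?_⟩
    exact connected_of_bridges (by linarith) hSne
      (bridges_mono (by linarith) hδbr)
  have hTne : T.Nonempty := ⟨δ0 + 1, hmemT δ0 ⟨hδ0, hbr⟩ 1 one_pos⟩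
  show sInf Bset = sInf T
  apply le_antisymm
  · refine le_csInf hTne ?_
    rintro d ⟨r, hr, rfl, hconn⟩
    exact csInf_le hBbd ⟨by linarith, bridges_of_connected b hMfin hr hconn⟩
  · refine le_csInf hBne ?_
    intro δ hδ
    refine le_of_forall_pos_le_add fun ε hε => ?_
    exact csInf_le hTbd (hmemT δ hδ ε hε)
end
end

section
/- Let S = Λ + M be a periodic point set in ℝ^n with unit cell U on a basis v_1, …, v_n. Let b = max_{i=1,…,n} |v_i| be the maximum edge-length of U and let d = max over all sign vectors (ε_1,…,ε_n) ∈ {−1,+1}^n of |Σ_{i=1}^n ε_i v_i| be the length of the longest diagonal of U. Then β(S) ≤ max{b, d/2}. -/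
noncomputable section

namespace BridgeAux

variable {n : ℕ}

local notation "E" => EuclideanSpace ℝ (Fin n)

/-- one step relation -/
def Step (δ : ℝ) (S : Set (EuclideanSpace ℝ (Fin n))) (x y : EuclideanSpace ℝ (Fin n)) : Prop :=
  y ∈ S ∧ dist x y ≤ δ

lemma reach_of_rtg {δ : ℝ} {S : Set (EuclideanSpace ℝ (Fin n))} {p q : EuclideanSpace ℝ (Fin n)}
    (hp : p ∈ S) (h : Relation.ReflTransGen (Step δ S) p q) :
    ∃ k : ℕ, ∃ f : Fin (k + 1) → EuclideanSpace ℝ (Fin n),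
      f 0 = p ∧ f (Fin.last k) = q ∧ (∀ i, f i ∈ S) ∧
      ∀ i : Fin k, dist (f i.castSucc) (f i.succ) ≤ δ := by
  induction h with
  | refl => exact ⟨0, fun _ => p, rfl, rfl, fun _ => hp, fun i => i.elim0⟩
  | @tail x y hxy hstep ih =>
    obtain ⟨k, f, hf0, hfl, hfS, hfd⟩ := ih
    refine ⟨k + 1, Fin.snoc f y, ?_, ?_, ?_, ?_⟩
    · rw [show (0 : Fin (k + 2)) = (0 : Fin (k+1)).castSucc from rfl, Fin.snoc_castSucc, hf0]
    · rw [Fin.snoc_last]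
    · intro i
      refine Fin.lastCases ?_ ?_ i
      · rw [Fin.snoc_last]; exact hstep.1
      · intro j; rw [Fin.snoc_castSucc]; exact hfS j
    · intro i
      refine Fin.lastCases ?_ ?_ i
      · rw [Fin.succ_last, Fin.snoc_last, Fin.snoc_castSucc, hfl]
        exact hstep.2
      · intro j
        rw [Fin.succ_castSucc, Fin.snoc_castSucc, Fin.snoc_castSucc]
        exact hfd j

variable (b : Module.Basis (Fin n) ℝ (EuclideanSpace ℝ (Fin n)))
variable (M : Set (EuclideanSpace ℝ (Fin n)))

lemma mem_add_lat {x l : EuclideanSpace ℝ (Fin n)} (hx : x ∈ periodicSet b M)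
    (hl : l ∈ lat b) : x + l ∈ periodicSet b M := by
  obtain ⟨l₀, hl₀, p, hp, rfl⟩ := hx
  exact ⟨l₀ + l, add_mem hl₀ hl, p, hp, by abel⟩

lemma basis_mem_lat (i : Fin n) : b i ∈ lat b :=
  Submodule.subset_span (Set.mem_range_self i)

lemma walk_zsmul {δ : ℝ} (hδ : ∀ i, ‖b i‖ ≤ δ) (i : Fin n) (z : ℤ)
    {x : EuclideanSpace ℝ (Fin n)} (hx : x ∈ periodicSet b M) :
    Relation.ReflTransGen (Step δ (periodicSet b M)) x (x + z • b i) := by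
  induction z using Int.induction_on with
  | zero => simpa using Relation.ReflTransGen.refl
  | succ k ih =>
    refine ih.tail ⟨?_, ?_⟩
    · exact mem_add_lat b M hx (Submodule.smul_mem _ _ (basis_mem_lat b i))
    · have h1 : (x + ((k : ℤ) + 1) • b i) - (x + (k : ℤ) • b i) = b i := by
        rw [add_smul, one_smul]; abel
      rw [dist_eq_norm, ← norm_neg, neg_sub, h1]
      exact hδ i
  | pred k ih =>
    refine ih.tail ⟨?_, ?_⟩
    · exact mem_add_lat b M hx (Submodule.smul_mem _ _ (basis_mem_lat b i))
    · have h1 : (x + (-(k : ℤ) - 1) • b i) - (x + (-(k : ℤ)) • b i) = -(b i) := by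
        rw [sub_smul, one_smul]; abel
      rw [dist_eq_norm, ← norm_neg, neg_sub, h1, norm_neg]
      exact hδ i

lemma walk_sum {δ : ℝ} (hδ : ∀ i, ‖b i‖ ≤ δ) (a : Fin n → ℤ) (s : Finset (Fin n)) :
    ∀ {x : EuclideanSpace ℝ (Fin n)}, x ∈ periodicSet b M →
    Relation.ReflTransGen (Step δ (periodicSet b M)) x (x + ∑ i ∈ s, a i • b i) := by
  classical
  induction s using Finset.induction_on with
  | empty => intro x hx; simpa using Relation.ReflTransGen.refl
  | @insert j s hj ih =>
    intro x hx
    have h1 := walk_zsmul b M hδ j (a j) hx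
    have hx' : x + a j • b j ∈ periodicSet b M :=
      mem_add_lat b M hx (Submodule.smul_mem _ _ (basis_mem_lat b j))
    have h2 := ih hx'
    have : x + ∑ i ∈ insert j s, a i • b i = (x + a j • b j) + ∑ i ∈ s, a i • b i := by
      rw [Finset.sum_insert hj]; abel
    rw [this]
    exact h1.trans h2

lemma walk_lat {δ : ℝ} (hδ : ∀ i, ‖b i‖ ≤ δ) {l : EuclideanSpace ℝ (Fin n)}
    (hl : l ∈ lat b) {x : EuclideanSpace ℝ (Fin n)} (hx : x ∈ periodicSet b M) :
    Relation.ReflTransGen (Step δ (periodicSet b M)) x (x + l) := by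
  obtain ⟨a, rfl⟩ := (Submodule.mem_span_range_iff_exists_fun ℤ).1 hl
  exact walk_sum b M hδ a Finset.univ hx

/-- one-variable convexity of the norm -/
lemma one_var (t : ℝ) (ht : |t| ≤ 1/2) (v w : EuclideanSpace ℝ (Fin n)) :
    ∃ t' : ℝ, (t' = 1/2 ∨ t' = -(1/2)) ∧ ‖t • v + w‖ ≤ ‖t' • v + w‖ := by
  have h1 : -(1/2 : ℝ) ≤ t := neg_le_of_abs_le ht
  have h2 : t ≤ 1/2 := le_of_abs_le ht
  set A := (1/2 : ℝ) • v + w with hA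
  set B := (-(1/2) : ℝ) • v + w with hB
  have key : t • v + w = (t + 1/2) • A + (1/2 - t) • B := by
    rw [hA, hB]; module
  have hbound : ‖t • v + w‖ ≤ (t + 1/2) * ‖A‖ + (1/2 - t) * ‖B‖ := by
    rw [key]
    refine (norm_add_le _ _).trans ?_
    rw [norm_smul, norm_smul, Real.norm_of_nonneg (by linarith), Real.norm_of_nonneg (by linarith)]
  by_cases hAB : ‖A‖ ≤ ‖B‖
  · refine ⟨-(1/2), Or.inr rfl, ?_⟩
    rw [← hB]
    nlinarith [norm_nonneg A, norm_nonneg B]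
  · refine ⟨1/2, Or.inl rfl, ?_⟩
    rw [← hA]
    nlinarith [norm_nonneg A, norm_nonneg B]

lemma vertexify (s : Finset (Fin n)) (c : Fin n → ℝ) (hc : ∀ i, |c i| ≤ 1/2) :
    ∃ c' : Fin n → ℝ, (∀ i, |c' i| ≤ 1/2) ∧ (∀ i ∈ s, c' i = 1/2 ∨ c' i = -(1/2)) ∧
      ‖∑ i, c i • b i‖ ≤ ‖∑ i, c' i • b i‖ := by
  classical
  induction s using Finset.induction_on with
  | empty => exact ⟨c, hc, fun i hi => absurd hi (Finset.notMem_empty i), le_refl _⟩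
  | @insert a s ha ih =>
    obtain ⟨c', hc', hcs, hle⟩ := ih
    have hsplit : ∑ i, c' i • b i = c' a • b a + ∑ i ∈ Finset.univ.erase a, c' i • b i :=
      (Finset.add_sum_erase _ _ (Finset.mem_univ a)).symm
    obtain ⟨t', ht', hle'⟩ := one_var (c' a) (hc' a) (b a) (∑ i ∈ Finset.univ.erase a, c' i • b i)
    refine ⟨Function.update c' a t', ?_, ?_, ?_⟩
    · intro i
      rcases eq_or_ne i a with rfl | hne
      · rw [Function.update_self]
        rcases ht' with rfl | rfl <;> rw [abs_le] <;> constructor <;> norm_num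
      · rw [Function.update_of_ne hne]; exact hc' i
    · intro i hi
      rcases eq_or_ne i a with rfl | hne
      · rw [Function.update_self]; exact ht'
      · rw [Function.update_of_ne hne]
        exact hcs i ((Finset.mem_insert.1 hi).resolve_left hne)
    · have hsplit2 : ∑ i, Function.update c' a t' i • b i
          = t' • b a + ∑ i ∈ Finset.univ.erase a, c' i • b i := by
        rw [← Finset.add_sum_erase _ _ (Finset.mem_univ a), Function.update_self]
        congr 1
        refine Finset.sum_congr rfl fun i hi => ?_
        rw [Function.update_of_ne (Finset.ne_of_mem_erase hi)]
      rw [hsplit2]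
      exact hle.trans (hsplit ▸ hle')

lemma convexity (D : ℝ)
    (hD : ∀ ε : Fin n → Bool, ‖∑ i, (if ε i then (1 : ℝ) else -1) • b i‖ ≤ D)
    (c : Fin n → ℝ) (hc : ∀ i, |c i| ≤ 1/2) :
    ‖∑ i, c i • b i‖ ≤ D / 2 := by
  classical
  obtain ⟨c', hc', hsign, hle⟩ := vertexify b Finset.univ c hc
  set ε : Fin n → Bool := fun i => decide (c' i = 1/2) with hε
  have hrw : ∑ i, c' i • b i = (1/2 : ℝ) • ∑ i, (if ε i then (1 : ℝ) else -1) • b i := by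
    rw [Finset.smul_sum]
    refine Finset.sum_congr rfl fun i _ => ?_
    rw [smul_smul]
    rcases hsign i (Finset.mem_univ i) with h | h
    · have hεi : ε i = true := decide_eq_true h
      rw [hεi, if_pos rfl, h]; norm_num
    · have hεi : ε i = false := decide_eq_false (by rw [h]; norm_num)
      rw [hεi, if_neg (by simp), h, show (1/2 : ℝ) * -1 = -(1/2) by norm_num]
  refine hle.trans ?_
  rw [hrw, norm_smul, Real.norm_of_nonneg (by norm_num : (0:ℝ) ≤ 1/2)]
  have := hD ε
  linarith

/-- rounding: any two points are lattice-translate-close within D/2 -/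
lemma round_close (D : ℝ)
    (hD : ∀ ε : Fin n → Bool, ‖∑ i, (if ε i then (1 : ℝ) else -1) • b i‖ ≤ D)
    (m m' : EuclideanSpace ℝ (Fin n)) :
    ∃ l ∈ (lat b : Set (EuclideanSpace ℝ (Fin n))), ‖m - (m' + l)‖ ≤ D / 2 := by
  set c : Fin n → ℝ := fun i => b.repr (m - m') i with hc
  refine ⟨∑ i, ((round (c i) : ℝ)) • b i, ?_, ?_⟩
  · refine Submodule.sum_mem _ fun i _ => ?_
    rw [Int.cast_smul_eq_zsmul]
    exact Submodule.smul_mem _ _ (basis_mem_lat b i)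
  · have hmm : m - m' = ∑ i, c i • b i := (b.sum_repr (m - m')).symm
    have hdiff : m - (m' + ∑ i, ((round (c i) : ℝ)) • b i)
        = ∑ i, (c i - (round (c i) : ℝ)) • b i := by
      have : ∑ i, (c i - (round (c i) : ℝ)) • b i
          = (∑ i, c i • b i) - ∑ i, ((round (c i) : ℝ)) • b i := by
        rw [← Finset.sum_sub_distrib]
        exact Finset.sum_congr rfl fun i _ => (sub_smul _ _ _)
      rw [this, ← hmm]; abel
    rw [hdiff]
    exact convexity b D hD _ fun i => abs_sub_round (c i)

lemma bridges_main (δ : ℝ) (hδB : ∀ i, ‖b i‖ ≤ δ)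
    (hδD : ∀ ε : Fin n → Bool, ‖∑ i, (if ε i then (1 : ℝ) else -1) • b i‖ ≤ 2 * δ) :
    Bridges δ (periodicSet b M) := by
  intro p hp q hq
  obtain ⟨lp, hlp, mp, hmp, rfl⟩ := hp
  obtain ⟨lq, hlq, mq, hmq, rfl⟩ := hq
  obtain ⟨l₀, hl₀, hclose⟩ := round_close b (2 * δ) hδD mp mq
  have hδ' : (2 : ℝ) * δ / 2 = δ := by ring
  rw [hδ'] at hclose
  set x : EuclideanSpace ℝ (Fin n) := (lp + l₀) + mq with hx
  have hxS : x ∈ periodicSet b M := ⟨lp + l₀, add_mem hlp hl₀, mq, hmq, rfl⟩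
  have hstep1 : Relation.ReflTransGen (Step δ (periodicSet b M)) (lp + mp) x := by
    refine Relation.ReflTransGen.single ⟨hxS, ?_⟩
    rw [dist_eq_norm]
    have : (lp + mp) - x = mp - (mq + l₀) := by rw [hx]; abel
    rw [this]
    exact hclose
  have hl' : lq - lp - l₀ ∈ lat b := sub_mem (sub_mem hlq hlp) hl₀
  have hstep2 := walk_lat b M hδB hl' hxS
  have hxq : x + (lq - lp - l₀) = lq + mq := by rw [hx]; abel
  rw [hxq] at hstep2
  exact reach_of_rtg ⟨lp, hlp, mp, hmp, rfl⟩ (hstep1.trans hstep2)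

end BridgeAux

/-- β(S) ≤ max{b, d/2}, where b is the maximum length of a basis vector of
the unit cell U and d is the length of the longest diagonal of U, i.e. the maximum over
all sign vectors (ε_1,…,ε_n) ∈ {−1,+1}^n of |Σ ε_i v_i|. -/
theorem bridgeLength_le_cell_bound {n : ℕ} (hn : 0 < n)
    (b : Module.Basis (Fin n) ℝ (EuclideanSpace ℝ (Fin n)))
    (M : Set (EuclideanSpace ℝ (Fin n))) (hMfin : M.Finite) (hMne : M.Nonempty)
    (hMU : M ⊆ unitCell b) :
    bridgeLength (periodicSet b M) ≤
      max (Finset.univ.sup' ⟨⟨0, hn⟩, Finset.mem_univ _⟩ fun i => ‖b i‖)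
        ((Finset.univ.sup' ⟨fun _ => true, Finset.mem_univ _⟩
          fun ε : Fin n → Bool => ‖∑ i, (if ε i then (1 : ℝ) else -1) • b i‖) / 2) := by
  classical
  refine csInf_le ⟨0, fun x hx => hx.1⟩ ?_
  have hBδ : ∀ i, ‖b i‖ ≤ max (Finset.univ.sup' ⟨⟨0, hn⟩, Finset.mem_univ _⟩ fun i => ‖b i‖)
      ((Finset.univ.sup' ⟨fun _ => true, Finset.mem_univ _⟩
        fun ε : Fin n → Bool => ‖∑ i, (if ε i then (1 : ℝ) else -1) • b i‖) / 2) :=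
    by intro i; exact le_trans (Finset.le_sup' (fun j => ‖b j‖) (Finset.mem_univ i)) (le_max_left _ _)
  have hDδ : ∀ ε : Fin n → Bool, ‖∑ i, (if ε i then (1 : ℝ) else -1) • b i‖ ≤
      2 * max (Finset.univ.sup' ⟨⟨0, hn⟩, Finset.mem_univ _⟩ fun i => ‖b i‖)
      ((Finset.univ.sup' ⟨fun _ => true, Finset.mem_univ _⟩
        fun ε : Fin n → Bool => ‖∑ i, (if ε i then (1 : ℝ) else -1) • b i‖) / 2) := by
    intro ε
    have h1 : ‖∑ i, (if ε i then (1 : ℝ) else -1) • b i‖ ≤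
        Finset.univ.sup' ⟨fun _ => true, Finset.mem_univ _⟩
          (fun ε : Fin n → Bool => ‖∑ i, (if ε i then (1 : ℝ) else -1) • b i‖) :=
      Finset.le_sup' (fun ε' : Fin n → Bool => ‖∑ i, (if ε' i then (1 : ℝ) else -1) • b i‖)
        (Finset.mem_univ ε)
    have h2 := le_max_right (Finset.univ.sup' ⟨⟨0, hn⟩, Finset.mem_univ _⟩ fun i => ‖b i‖)
      ((Finset.univ.sup' ⟨fun _ => true, Finset.mem_univ _⟩
        fun ε : Fin n → Bool => ‖∑ i, (if ε i then (1 : ℝ) else -1) • b i‖) / 2)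
    linarith
  exact ⟨le_trans (norm_nonneg (b ⟨0, hn⟩)) (hBδ _), BridgeAux.bridges_main b M _ hBδ hDδ⟩
end
end

section
/- Let S = Λ + M be a nonempty periodic point set in ℝ^n and let R(S) = sup_{x ∈ ℝ^n} dist(x, S) be its covering radius, i.e. the smallest radius R such that the union of closed balls of radius R centred at all points of S covers ℝ^n. Then R(S) is finite and β(S) ≤ 2·R(S). -/
noncomputable section

/-- For a nonempty periodic point set S = Λ + M, the covering radius
R(S) = sup_{x ∈ ℝ^n} dist(x, S) is finite and β(S) ≤ 2·R(S). -/
theorem bridgeLength_le_two_covering_radius {n : ℕ}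
    (b : Module.Basis (Fin n) ℝ (EuclideanSpace ℝ (Fin n)))
    (M : Set (EuclideanSpace ℝ (Fin n))) (hMfin : M.Finite) (hMne : M.Nonempty)
    (hMU : M ⊆ unitCell b) :
    BddAbove (Set.range fun x : EuclideanSpace ℝ (Fin n) =>
      Metric.infDist x (periodicSet b M)) ∧
    bridgeLength (periodicSet b M) ≤
      2 * ⨆ x : EuclideanSpace ℝ (Fin n), Metric.infDist x (periodicSet b M) := by
  set S := periodicSet b M with hS
  obtain ⟨p0, hp0⟩ := hMne
  have hSne : S.Nonempty := ⟨(0 : EuclideanSpace ℝ (Fin n)) + p0, 0, Submodule.zero_mem _, p0, hp0, rfl⟩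
  have hbdd : BddAbove (Set.range fun x : EuclideanSpace ℝ (Fin n) => Metric.infDist x S) := by
    refine ⟨∑ i, ‖b i‖, ?_⟩
    rintro _ ⟨x, rfl⟩
    set c : Fin n → ℝ := fun i => b.repr x i with hc
    set l : EuclideanSpace ℝ (Fin n) := ∑ i, (⌊c i⌋ : ℤ) • b i with hl
    have hlΛ : l ∈ lat b := Submodule.sum_mem _ fun i _ =>
      Submodule.smul_mem _ _ (Submodule.subset_span ⟨i, rfl⟩)
    have hmem : l + p0 ∈ S := ⟨l, hlΛ, p0, hp0, rfl⟩
    set m : Fin n → ℝ := fun i => b.repr p0 i with hm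
    have hxl : x - (l + p0) = ∑ i, (c i - (⌊c i⌋ : ℝ) - m i) • b i := by
      have hx : x = ∑ i, c i • b i := (b.sum_repr x).symm
      have hp : p0 = ∑ i, m i • b i := (b.sum_repr p0).symm
      have hl' : l = ∑ i, ((⌊c i⌋ : ℝ)) • b i := by
        rw [hl]; congr 1; ext i; rw [Int.cast_smul_eq_zsmul]
      conv_lhs => rw [hx, hl', hp]
      rw [← Finset.sum_add_distrib, ← Finset.sum_sub_distrib]
      congr 1; ext i; rw [sub_smul, sub_smul, sub_sub]
    calc Metric.infDist x S ≤ dist x (l + p0) := Metric.infDist_le_dist_of_mem hmem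
    _ = ‖∑ i, (c i - (⌊c i⌋ : ℝ) - m i) • b i‖ := by rw [dist_eq_norm, hxl]
    _ ≤ ∑ i, ‖(c i - (⌊c i⌋ : ℝ) - m i) • b i‖ := norm_sum_le _ _
    _ ≤ ∑ i, ‖b i‖ := by
        refine Finset.sum_le_sum fun i _ => ?_
        rw [norm_smul]
        have h1 : 0 ≤ c i - (⌊c i⌋ : ℝ) := sub_nonneg.mpr (Int.floor_le _)
        have h2 : c i - (⌊c i⌋ : ℝ) < 1 := by
          have := Int.lt_floor_add_one (c i); linarith
        have h3 : 0 ≤ m i := (hMU hp0 i).1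
        have h4 : m i < 1 := (hMU hp0 i).2
        have habs : ‖c i - (⌊c i⌋ : ℝ) - m i‖ ≤ 1 := by
          rw [Real.norm_eq_abs, abs_le]; constructor <;> linarith
        calc ‖c i - (⌊c i⌋ : ℝ) - m i‖ * ‖b i‖ ≤ 1 * ‖b i‖ :=
          mul_le_mul_of_nonneg_right habs (norm_nonneg _)
        _ = ‖b i‖ := one_mul _
  refine ⟨hbdd, ?_⟩
  set R := ⨆ x : EuclideanSpace ℝ (Fin n), Metric.infDist x S with hR
  have hRle : ∀ x, Metric.infDist x S ≤ R := fun x => le_ciSup hbdd x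
  have hR0 : 0 ≤ R := le_trans Metric.infDist_nonneg (hRle 0)
  have key : ∀ ε > (0:ℝ), Bridges (2 * R + ε) S := by
    intro ε hε p hp q hq
    obtain ⟨N, hN⟩ := exists_nat_gt (dist p q / (ε / 2))
    have hNpos : 0 < N := by
      by_contra h
      push_neg at h
      interval_cases N
      have : (0:ℝ) ≤ dist p q / (ε / 2) := div_nonneg dist_nonneg (by linarith)
      simp at hN; linarith
    have hNR : (0:ℝ) < N := by exact_mod_cast hNpos
    have hstep : dist p q / N ≤ ε / 2 := by
      rw [div_le_iff₀ hNR]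
      have := (div_lt_iff₀ (by linarith : (0:ℝ) < ε/2)).mp hN
      linarith [this]
    set x : Fin (N + 1) → EuclideanSpace ℝ (Fin n) :=
      fun j => p + ((j : ℝ) / N) • (q - p) with hxdef
    have hx0 : x 0 = p := by simp [hxdef]
    have hxN : x (Fin.last N) = q := by
      simp only [hxdef, Fin.val_last]
      rw [div_self (ne_of_gt hNR), one_smul]
      abel
    have hchoice : ∀ j, ∃ s ∈ S, dist (x j) s < R + ε / 4 := by
      intro j
      have h1 : Metric.infDist (x j) S < R + ε / 4 := lt_of_le_of_lt (hRle (x j)) (by linarith)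
      exact (Metric.infDist_lt_iff hSne).mp h1
    choose g hgS hgd using hchoice
    have hlast0 : (Fin.last N : Fin (N+1)) ≠ 0 := by
      intro h
      have := congrArg Fin.val h
      simp [Fin.val_last] at this
      omega
    refine ⟨N, fun j => if j = 0 then p else if j = Fin.last N then q else g j, by simp, ?_, ?_, ?_⟩
    · simp [hlast0]
    · intro j
      dsimp only
      split_ifs
      · exact hp
      · exact hq
      · exact hgS j
    · intro i
      have hbound : ∀ j, dist (x j) (if j = 0 then p else if j = Fin.last N then q else g j) ≤ R + ε / 4 := by
        intro j
        split_ifs with h1 h2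
        · subst h1; rw [hx0]; simp; linarith
        · subst h2; rw [hxN]; simp; linarith
        · exact le_of_lt (hgd j)
      have hxx : dist (x i.castSucc) (x i.succ) ≤ ε / 2 := by
        have : x i.succ - x i.castSucc = ((1:ℝ) / N) • (q - p) := by
          simp only [hxdef]
          rw [add_sub_add_left_eq_sub, ← sub_smul]
          congr 1
          rw [Fin.val_succ, Fin.coe_castSucc]
          push_cast
          field_simp
          ring
        rw [dist_eq_norm, ← neg_sub, norm_neg, this, norm_smul]
        rw [Real.norm_eq_abs, abs_of_pos (by positivity : (0:ℝ) < 1/N)]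
        rw [← dist_eq_norm, dist_comm q p]
        calc 1 / (N:ℝ) * dist p q = dist p q / N := by ring
        _ ≤ ε / 2 := hstep
      calc dist ((fun j => if j = 0 then p else if j = Fin.last N then q else g j) i.castSucc)
            ((fun j => if j = 0 then p else if j = Fin.last N then q else g j) i.succ)
          ≤ dist _ (x i.castSucc) + dist (x i.castSucc) (x i.succ) + dist (x i.succ) _ :=
            dist_triangle4 _ _ _ _
        _ ≤ (R + ε / 4) + ε / 2 + (R + ε / 4) := by
            gcongr
            · rw [dist_comm]; exact hbound i.castSucc
            · exact hbound i.succ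
        _ = 2 * R + ε := by ring
  have hTbdd : BddBelow {δ : ℝ | 0 ≤ δ ∧ Bridges δ S} := ⟨0, fun δ hδ => hδ.1⟩
  refine le_of_forall_pos_le_add fun ε hε => ?_
  exact csInf_le hTbdd ⟨by linarith, key ε hε⟩
end
end
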